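/- Let α > 0 and define f(t) = 2 e^{−αt} sin(e^{t/2}) and g(t) = −e^{−αt} e^{−t/2} cos(e^{t/2}) for t ∈ (0, ∞). Then f ∈ L²((0, ∞)), g' ∈ L²((0, ∞)), and the function t ↦ e^{t} g(t) + f'(t) is in L²((0, ∞)); however, for every β ≥ 1/2 + α the function t ↦ e^{βt} g(t) is not in L²((0, ∞)). -/

import Mathlib

open MeasureTheory Set Filter

lemma aux_cos_sq_interval (a b : ℝ) :
    ∫ u in a..b, Real.cos u ^ 2 =
      (b / 2 + Real.sin b * Real.cos b / 2) - (a / 2 + Real.sin a * Real.cos a / 2) := by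
  apply intervalIntegral.integral_eq_sub_of_hasDerivAt
  · intro u _
    have h : HasDerivAt (fun u : ℝ => u / 2 + Real.sin u * Real.cos u / 2)
        (1 / 2 + (Real.cos u * Real.cos u + Real.sin u * -Real.sin u) / 2) u :=
      HasDerivAt.add ((hasDerivAt_id u).div_const 2)
        (((Real.hasDerivAt_sin u).mul (Real.hasDerivAt_cos u)).div_const 2)
    refine h.congr_deriv ?_
    have := Real.sin_sq_add_cos_sq u
    nlinarith
  · exact Continuous.intervalIntegrable (by fun_prop) a b

lemma aux_hasDerivAt_f (α t : ℝ) :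
    HasDerivAt (fun t => 2 * Real.exp (-α * t) * Real.sin (Real.exp (t / 2)))
      (-(2 * α) * Real.exp (-α * t) * Real.sin (Real.exp (t / 2))
        + Real.exp (-α * t) * Real.exp (t / 2) * Real.cos (Real.exp (t / 2))) t := by
  have hA : HasDerivAt (fun t : ℝ => Real.exp (-α * t)) (Real.exp (-α * t) * (-α * 1)) t :=
    ((hasDerivAt_id t).const_mul (-α)).exp
  have hS : HasDerivAt (fun t : ℝ => Real.sin (Real.exp (t / 2)))
      (Real.cos (Real.exp (t / 2)) * (Real.exp (t / 2) * (1 / 2))) t :=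
    (((hasDerivAt_id t).div_const 2).exp).sin
  have := (hA.const_mul 2).mul hS
  refine this.congr_deriv ?_
  ring

lemma aux_hasDerivAt_g (α t : ℝ) :
    HasDerivAt (fun t => -(Real.exp (-α * t) * Real.exp (-t / 2) * Real.cos (Real.exp (t / 2))))
      ((α + 1 / 2) * Real.exp (-α * t) * Real.exp (-t / 2) * Real.cos (Real.exp (t / 2))
        + (1 / 2) * Real.exp (-α * t) * Real.sin (Real.exp (t / 2))) t := by
  have hA : HasDerivAt (fun t : ℝ => Real.exp (-α * t)) (Real.exp (-α * t) * (-α * 1)) t :=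
    ((hasDerivAt_id t).const_mul (-α)).exp
  have hB : HasDerivAt (fun t : ℝ => Real.exp (-t / 2)) (Real.exp (-t / 2) * (-1 / 2)) t := by
    have := (((hasDerivAt_id t).neg).div_const 2).exp
    simpa using this
  have hC : HasDerivAt (fun t : ℝ => Real.cos (Real.exp (t / 2)))
      (-Real.sin (Real.exp (t / 2)) * (Real.exp (t / 2) * (1 / 2))) t :=
    (((hasDerivAt_id t).div_const 2).exp).cos
  have := ((hA.mul hB).mul hC).neg
  refine this.congr_deriv ?_
  simp only [Pi.mul_apply]
  have h1 : Real.exp (-t / 2) * Real.exp (t / 2) = 1 := by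
    rw [← Real.exp_add]
    ring_nf
    exact Real.exp_zero
  linear_combination (Real.exp (-α * t) * Real.sin (Real.exp (t / 2)) / 2) * h1

lemma aux_int {F : ℝ → ℝ} (c C : ℝ) (hc : 0 < c)
    (hm : AEStronglyMeasurable F (volume.restrict (Set.Ioi 0)))
    (hb : ∀ t ∈ Set.Ioi (0 : ℝ), ‖F t‖ ≤ C * Real.exp (-c * t)) :
    IntegrableOn F (Set.Ioi 0) := by
  refine Integrable.mono' ((exp_neg_integrableOn_Ioi 0 hc).const_mul C) hm ?_
  exact (ae_restrict_iff' measurableSet_Ioi).2 (Eventually.of_forall hb)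

set_option maxHeartbeats 2000000 in
/-- sharpness of the interpolation inequality: for `α > 0`,
`f(t) = 2 e^{-αt} sin(e^{t/2})`, `g(t) = -e^{-αt} e^{-t/2} cos(e^{t/2})`,
the functions `f`, `g'` and `e^t g + f'` are square integrable on `(0, ∞)`,
but for every `β ≥ 1/2 + α`, the function `e^{βt} g` is not. -/
theorem stmt4 (α : ℝ) (hα : 0 < α) (f g : ℝ → ℝ)
    (hf : f = fun t => 2 * Real.exp (-α * t) * Real.sin (Real.exp (t / 2)))
    (hg : g = fun t => -(Real.exp (-α * t) * Real.exp (-t / 2) * Real.cos (Real.exp (t / 2)))) :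
    IntegrableOn (fun t => f t ^ 2) (Ioi 0) ∧
    IntegrableOn (fun t => deriv g t ^ 2) (Ioi 0) ∧
    IntegrableOn (fun t => (Real.exp t * g t + deriv f t) ^ 2) (Ioi 0) ∧
    ∀ β : ℝ, 1 / 2 + α ≤ β →
      ¬ IntegrableOn (fun t => (Real.exp (β * t) * g t) ^ 2) (Ioi 0) := by
  subst hf; subst hg
  have hfd : deriv (fun t => 2 * Real.exp (-α * t) * Real.sin (Real.exp (t / 2)))
      = fun t => -(2 * α) * Real.exp (-α * t) * Real.sin (Real.exp (t / 2))
        + Real.exp (-α * t) * Real.exp (t / 2) * Real.cos (Real.exp (t / 2)) :=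
    funext fun t => (aux_hasDerivAt_f α t).deriv
  have hgd : deriv (fun t => -(Real.exp (-α * t) * Real.exp (-t / 2) * Real.cos (Real.exp (t / 2))))
      = fun t => (α + 1 / 2) * Real.exp (-α * t) * Real.exp (-t / 2) * Real.cos (Real.exp (t / 2))
        + (1 / 2) * Real.exp (-α * t) * Real.sin (Real.exp (t / 2)) :=
    funext fun t => (aux_hasDerivAt_g α t).deriv
  have hexp2 : ∀ t : ℝ, Real.exp (-α * t) ^ 2 = Real.exp (-(2 * α) * t) := by
    intro t; rw [sq, ← Real.exp_add]; ring_nf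
  refine ⟨?_, ?_, ?_, ?_⟩
  · -- f² integrable
    refine aux_int (2 * α) 4 (by linarith) ?_ ?_
    · exact (Continuous.aestronglyMeasurable (by fun_prop)).restrict
    · intro t _
      have h1 := Real.sin_sq_le_one (Real.exp (t / 2))
      have h2 := sq_nonneg (Real.sin (Real.exp (t / 2)))
      have h3 : (0:ℝ) < Real.exp (-α * t) := Real.exp_pos _
      rw [Real.norm_eq_abs, abs_of_nonneg (sq_nonneg _)]
      have : (2 * Real.exp (-α * t) * Real.sin (Real.exp (t / 2))) ^ 2
          = 4 * Real.exp (-α * t) ^ 2 * Real.sin (Real.exp (t / 2)) ^ 2 := by ring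
      rw [this, hexp2]
      nlinarith [Real.exp_pos (-(2 * α) * t)]
  · -- (g')² integrable
    refine aux_int (2 * α) ((α + 1) ^ 2) (by linarith) ?_ ?_
    · rw [hgd]
      exact (Continuous.aestronglyMeasurable (by fun_prop)).restrict
    · intro t ht
      rw [hgd]
      set A := Real.exp (-α * t) with hA
      set B := Real.exp (-t / 2) with hB
      set c := Real.cos (Real.exp (t / 2)) with hc
      set s := Real.sin (Real.exp (t / 2)) with hs
      have hApos : 0 < A := Real.exp_pos _
      have hBpos : 0 < B := Real.exp_pos _
      have hB1 : B ≤ 1 := by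
        rw [hB]
        apply Real.exp_le_one_iff.2
        have : (0:ℝ) < t := ht
        linarith
      have hc1 : |c| ≤ 1 := Real.abs_cos_le_one _
      have hs1 : |s| ≤ 1 := Real.abs_sin_le_one _
      have t1 : |(α + 1 / 2) * A * B * c| ≤ (α + 1 / 2) * A := by
        rw [abs_mul, abs_of_nonneg (by positivity : (0:ℝ) ≤ (α + 1 / 2) * A * B)]
        have h0 : 0 ≤ (α + 1 / 2) * A := by positivity
        calc (α + 1 / 2) * A * B * |c| = ((α + 1 / 2) * A) * (B * |c|) := by ring
          _ ≤ ((α + 1 / 2) * A) * 1 := by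
              apply mul_le_mul_of_nonneg_left _ h0
              nlinarith [abs_nonneg c]
          _ = (α + 1 / 2) * A := mul_one _
      have t2 : |1 / 2 * A * s| ≤ 1 / 2 * A := by
        rw [abs_mul, abs_of_nonneg (by positivity : (0:ℝ) ≤ 1 / 2 * A)]
        nlinarith [abs_nonneg s]
      have habs : |(α + 1 / 2) * A * B * c + 1 / 2 * A * s| ≤ (α + 1) * A := by
        have := abs_add_le ((α + 1 / 2) * A * B * c) (1 / 2 * A * s)
        linarith
      rw [Real.norm_eq_abs, abs_of_nonneg (sq_nonneg _), ← hexp2]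
      calc ((α + 1 / 2) * A * B * c + 1 / 2 * A * s) ^ 2
          = |(α + 1 / 2) * A * B * c + 1 / 2 * A * s| ^ 2 := (sq_abs _).symm
        _ ≤ ((α + 1) * A) ^ 2 := by
            apply pow_le_pow_left₀ (abs_nonneg _) habs
        _ = (α + 1) ^ 2 * A ^ 2 := by ring
  · -- (e^t g + f')² integrable
    have key : ∀ t : ℝ, Real.exp t *
          (-(Real.exp (-α * t) * Real.exp (-t / 2) * Real.cos (Real.exp (t / 2))))
          + (-(2 * α) * Real.exp (-α * t) * Real.sin (Real.exp (t / 2))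
            + Real.exp (-α * t) * Real.exp (t / 2) * Real.cos (Real.exp (t / 2)))
        = -(2 * α) * Real.exp (-α * t) * Real.sin (Real.exp (t / 2)) := by
      intro t
      have h1 : Real.exp t * Real.exp (-t / 2) = Real.exp (t / 2) := by
        rw [← Real.exp_add]; ring_nf
      linear_combination (-(Real.exp (-α * t) * Real.cos (Real.exp (t / 2)))) * h1
    rw [hfd]
    refine aux_int (2 * α) (4 * α ^ 2) (by linarith) ?_ ?_
    · exact (Continuous.aestronglyMeasurable (by fun_prop)).restrict
    · intro t _
      rw [key t, Real.norm_eq_abs, abs_of_nonneg (sq_nonneg _)]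
      have h1 := Real.sin_sq_le_one (Real.exp (t / 2))
      have : (-(2 * α) * Real.exp (-α * t) * Real.sin (Real.exp (t / 2))) ^ 2
          = 4 * α ^ 2 * Real.exp (-α * t) ^ 2 * Real.sin (Real.exp (t / 2)) ^ 2 := by ring
      rw [this, hexp2]
      have := mul_le_mul_of_nonneg_left h1
        (show (0:ℝ) ≤ 4 * α ^ 2 * Real.exp (-(2 * α) * t) by positivity)
      nlinarith [this]
  · -- non-integrability
    intro β hβ hI
    set G : ℝ → ℝ := fun t => Real.cos (Real.exp (t / 2)) ^ 2 with hGdef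
    have hGnn : ∀ t, 0 ≤ G t := fun t => sq_nonneg _
    have hGint : IntegrableOn G (Set.Ioi 0) := by
      refine hI.mono' (Continuous.aestronglyMeasurable (by fun_prop)).restrict ?_
      refine (ae_restrict_iff' measurableSet_Ioi).2 (Eventually.of_forall ?_)
      intro t ht
      have ht' : (0:ℝ) < t := ht
      have e1 : Real.exp (β * t) * (Real.exp (-α * t) * Real.exp (-t / 2))
          = Real.exp ((β - α - 1 / 2) * t) := by
        rw [← Real.exp_add, ← Real.exp_add]; ring_nf
      have e2 : 1 ≤ Real.exp ((β - α - 1 / 2) * t) := by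
        apply Real.one_le_exp
        have h0 : 0 ≤ β - α - 1 / 2 := by linarith
        exact mul_nonneg h0 ht'.le
      have e3 : (Real.exp (β * t) *
          (-(Real.exp (-α * t) * Real.exp (-t / 2) * Real.cos (Real.exp (t / 2))))) ^ 2
          = Real.exp ((β - α - 1 / 2) * t) ^ 2 * Real.cos (Real.exp (t / 2)) ^ 2 := by
        rw [← e1]; ring
      rw [Real.norm_eq_abs, abs_of_nonneg (hGnn t), e3]
      have h3 : 1 ≤ Real.exp ((β - α - 1 / 2) * t) ^ 2 := by nlinarith
      have := mul_le_mul_of_nonneg_right h3 (sq_nonneg (Real.cos (Real.exp (t / 2))))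
      simpa [hGdef] using this
    -- set up the intervals
    set T : ℕ → ℝ := fun k => 2 * Real.log (2 * Real.pi * (k + 1)) with hT
    have hpi := Real.pi_gt_three
    have harg : ∀ k : ℕ, (1:ℝ) < 2 * Real.pi * (k + 1) := by
      intro k
      have h0 : (0:ℝ) ≤ (k:ℝ) := Nat.cast_nonneg k
      nlinarith
    have hTpos : ∀ k, 0 < T k := by
      intro k
      have := Real.log_pos (harg k)
      simp only [hT]
      linarith
    have hTmono : ∀ j k : ℕ, j ≤ k → T j ≤ T k := by
      intro j k hjk
      have h1 : (0:ℝ) < 2 * Real.pi * (j + 1) := by nlinarith [(harg j)]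
      have : 2 * Real.pi * ((j:ℝ) + 1) ≤ 2 * Real.pi * ((k:ℝ) + 1) := by
        have : (j:ℝ) ≤ (k:ℝ) := Nat.cast_le.2 hjk
        nlinarith
      have := Real.log_le_log h1 this
      simp only [hT]
      linarith
    have hexpT : ∀ k : ℕ, Real.exp (T k / 2) = 2 * Real.pi * (k + 1) := by
      intro k
      have h1 : (0:ℝ) < 2 * Real.pi * (k + 1) := by nlinarith [(harg k)]
      simp only [hT]
      rw [show 2 * Real.log (2 * Real.pi * ((k:ℝ) + 1)) / 2 = Real.log (2 * Real.pi * (k + 1)) by ring]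
      exact Real.exp_log h1
    have hsin : ∀ k : ℕ, Real.sin (2 * Real.pi * (k + 1)) = 0 := by
      intro k
      have : 2 * Real.pi * ((k:ℝ) + 1) = ((2 * (k + 1) : ℕ) : ℝ) * Real.pi := by
        push_cast; ring
      rw [this]
      exact Real.sin_nat_mul_pi _
    -- the per-interval lower bound
    have key : ∀ k : ℕ, (1:ℝ) / (k + 2) ≤ ∫ t in (T k)..(T (k + 1)), G t := by
      intro k
      set a : ℝ := 2 * Real.pi * (k + 1) with ha
      set b : ℝ := 2 * Real.pi * (k + 2) with hb
      have hapos : (0:ℝ) < a := by nlinarith [(harg k)]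
      have hbpos : (0:ℝ) < b := by nlinarith [(harg k)]
      have hab : a ≤ b := by nlinarith
      -- substitution
      have hsub : (∫ t in (T k)..(T (k + 1)), G t) = ∫ u in a..b, 2 * Real.cos u ^ 2 / u := by
        have himg : (fun t => Real.exp (t / 2)) '' (Set.uIcc (T k) (T (k + 1))) ⊆ Set.Ioi 0 := by
          rintro x ⟨t, _, rfl⟩
          exact Real.exp_pos _
        have hcont : ContinuousOn (fun u : ℝ => 2 * Real.cos u ^ 2 / u)
            ((fun t => Real.exp (t / 2)) '' (Set.uIcc (T k) (T (k + 1)))) := by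
          refine ContinuousOn.mono ?_ himg
          exact ContinuousOn.div (Continuous.continuousOn (by fun_prop)) continuousOn_id
            (fun x hx => ne_of_gt hx)
        have hcv := intervalIntegral.integral_comp_smul_deriv'
          (f := fun t : ℝ => Real.exp (t / 2)) (f' := fun t : ℝ => Real.exp (t / 2) * (1 / 2))
          (g := fun u : ℝ => 2 * Real.cos u ^ 2 / u)
          (a := T k) (b := T (k + 1))
          (fun x _ => ((hasDerivAt_id x).div_const 2).exp)
          (Continuous.continuousOn (by fun_prop)) hcont
        have hpt : ∀ t ∈ Set.uIcc (T k) (T (k + 1)), G t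
            = (fun t : ℝ => Real.exp (t / 2) * (1 / 2)) t •
              ((fun u : ℝ => 2 * Real.cos u ^ 2 / u) ∘ fun t : ℝ => Real.exp (t / 2)) t := by
          intro t _
          have he : Real.exp (t / 2) ≠ 0 := ne_of_gt (Real.exp_pos _)
          show Real.cos (Real.exp (t / 2)) ^ 2 = _
          simp only [Function.comp_apply, smul_eq_mul]
          field_simp
        have ha' : Real.exp (T k / 2) = a := by rw [hexpT k]
        have hb' : Real.exp (T (k + 1) / 2) = b := by
          rw [hexpT (k + 1), hb]; push_cast; ring
        calc (∫ t in (T k)..(T (k + 1)), G t)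
            = ∫ t in (T k)..(T (k + 1)), (fun t : ℝ => Real.exp (t / 2) * (1 / 2)) t •
              ((fun u : ℝ => 2 * Real.cos u ^ 2 / u) ∘ fun t : ℝ => Real.exp (t / 2)) t :=
              intervalIntegral.integral_congr hpt
          _ = ∫ u in Real.exp (T k / 2)..Real.exp (T (k + 1) / 2), 2 * Real.cos u ^ 2 / u := hcv
          _ = ∫ u in a..b, 2 * Real.cos u ^ 2 / u := by rw [ha', hb']
      rw [hsub]
      have hi1 : IntervalIntegrable (fun u : ℝ => 2 * Real.cos u ^ 2 / u) volume a b := by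
        apply ContinuousOn.intervalIntegrable
        refine ContinuousOn.mono (ContinuousOn.div (Continuous.continuousOn (by fun_prop))
          continuousOn_id (fun x (hx : x ∈ Set.Ioi (0:ℝ)) => ne_of_gt hx)) ?_
        intro x hx
        rw [Set.uIcc_of_le hab] at hx
        exact lt_of_lt_of_le hapos hx.1
      have hi2 : IntervalIntegrable (fun u : ℝ => 2 * Real.cos u ^ 2 / b) volume a b :=
        Continuous.intervalIntegrable (by fun_prop) a b
      have hmono : (∫ u in a..b, 2 * Real.cos u ^ 2 / b) ≤ ∫ u in a..b, 2 * Real.cos u ^ 2 / u := by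
        apply intervalIntegral.integral_mono_on hab hi2 hi1
        intro u hu
        have hu0 : 0 < u := lt_of_lt_of_le hapos hu.1
        exact div_le_div_of_nonneg_left (by positivity) hu0 hu.2
      have hval : (∫ u in a..b, 2 * Real.cos u ^ 2 / b) = (1:ℝ) / (k + 2) := by
        have : (fun u : ℝ => 2 * Real.cos u ^ 2 / b) = fun u : ℝ => (2 / b) * Real.cos u ^ 2 := by
          funext u; ring
        rw [this, intervalIntegral.integral_const_mul, aux_cos_sq_interval]
        rw [show Real.sin b = 0 from by rw [hb]; exact_mod_cast hsin (k + 1)]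
        rw [show Real.sin a = 0 from hsin k]
        have hbne : b ≠ 0 := ne_of_gt hbpos
        field_simp
        rw [ha, hb]
        ring
      linarith
    -- summing up
    have hiint : ∀ k : ℕ, IntervalIntegrable G volume (T k) (T (k + 1)) := by
      intro k
      apply MeasureTheory.IntegrableOn.intervalIntegrable
      apply hGint.mono_set
      intro x hx
      rw [Set.uIcc_of_le (hTmono k (k + 1) (by omega))] at hx
      exact lt_of_lt_of_le (hTpos k) hx.1
    set M : ℝ := ∫ t in Set.Ioi (0:ℝ), G t with hM
    have hbound : ∀ n : ℕ, (∑ k ∈ Finset.range n, (1:ℝ) / (k + 2)) ≤ M := by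
      intro n
      have hsum : (∑ k ∈ Finset.range n, ∫ t in (T k)..(T (k + 1)), G t)
          = ∫ t in (T 0)..(T n), G t :=
        intervalIntegral.sum_integral_adjacent_intervals (fun k _ => hiint k)
      have h1 : (∑ k ∈ Finset.range n, (1:ℝ) / (k + 2))
          ≤ ∑ k ∈ Finset.range n, ∫ t in (T k)..(T (k + 1)), G t :=
        Finset.sum_le_sum fun k _ => key k
      have h2 : (∫ t in (T 0)..(T n), G t) ≤ M := by
        rw [intervalIntegral.integral_of_le (hTmono 0 n (Nat.zero_le n))]
        apply setIntegral_mono_set hGint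
        · exact (ae_restrict_iff' measurableSet_Ioi).2 (Eventually.of_forall fun t _ => hGnn t)
        · apply HasSubset.Subset.eventuallyLE
          intro x hx
          exact lt_trans (hTpos 0) hx.1
      rw [hsum] at h1
      linarith
    -- contradiction with divergence of harmonic series
    obtain ⟨n, hn⟩ :=
      (Real.tendsto_sum_range_one_div_nat_succ_atTop.eventually_gt_atTop (2 * M)).exists
    have hcmp : (∑ i ∈ Finset.range n, (1:ℝ) / (i + 1))
        ≤ 2 * ∑ k ∈ Finset.range n, (1:ℝ) / (k + 2) := by
      rw [Finset.mul_sum]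
      apply Finset.sum_le_sum
      intro i _
      have hi : (0:ℝ) < (i:ℝ) + 1 := by positivity
      have hi2 : (0:ℝ) < (i:ℝ) + 2 := by positivity
      have h2 : 2 * ((1:ℝ) / (i + 2)) = 2 / (i + 2) := by ring
      rw [h2, div_le_div_iff₀ hi hi2]
      nlinarith [Nat.cast_nonneg (α := ℝ) i]
    have := hbound n
    linarith
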